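/- Let X and Y be S-valued random variables that are conditionally independent and identically distributed given a sigma-field G. If X = Y almost surely, then X is measurable with respect to the P-completion of G; conversely, if X is G-measurable (up to null sets), then X = Y almost surely. -/

import Mathlib

open MeasureTheory Set
open scoped ENNReal ProbabilityTheory

/-- If a measurable `ℝ≥0∞`-valued function bounded by `1` has integral `μ univ`, it equals `1`
almost everywhere. -/
lemma aux_ae_eq_one_of_lintegral_eq {α : Type*} [MeasurableSpace α] {μ : Measure α}
    [IsFiniteMeasure μ] {f : α → ℝ≥0∞} (hf : Measurable f) (hle : ∀ a, f a ≤ 1)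
    (h : ∫⁻ a, f a ∂μ = μ Set.univ) : ∀ᵐ a ∂μ, f a = 1 := by
  have hfin : ∫⁻ a, f a ∂μ ≠ ∞ := by rw [h]; exact (measure_lt_top μ _).ne
  have hsub : ∫⁻ a, (1 - f a) ∂μ = 0 := by
    rw [lintegral_sub hf hfin (Filter.Eventually.of_forall hle), lintegral_one, h, tsub_self]
  have h0 := (lintegral_eq_zero_iff (measurable_const.sub hf)).mp hsub
  filter_upwards [h0] with a ha
  have ha' : (1 : ℝ≥0∞) - f a = 0 := ha
  exact le_antisymm (hle a) (tsub_eq_zero_iff_le.mp ha')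

/-- A probability measure giving mass one to a singleton is a Dirac measure. -/
lemma aux_eq_dirac_of_singleton {S : Type*} [MeasurableSpace S] [MeasurableSingletonClass S]
    (μ : Measure S) [IsProbabilityMeasure μ] {c : S} (h : μ {c} = 1) :
    μ = Measure.dirac c := by
  ext A hA
  rw [Measure.dirac_apply' _ hA]
  by_cases hc : c ∈ A
  · have h1 : μ A = 1 :=
      le_antisymm prob_le_one (h ▸ measure_mono (singleton_subset_iff.mpr hc))
    simp [hc, h1]
  · have hcompl : μ ({c}ᶜ) = 0 := by
      rw [measure_compl (measurableSet_singleton c) (measure_ne_top μ _), h, measure_univ,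
        tsub_self]
    have h0 : μ A = 0 :=
      measure_mono_null (subset_compl_singleton_iff.mpr hc) hcompl
    simp [hc, h0]

/-- **Characterization of endogeny.** Let `X` and `Y` be `S`-valued random variables that are
conditionally i.i.d. given a σ-field `G` (with common conditional law `ξ`). Then `X = Y`
almost surely if and only if `X` coincides almost surely with a `G`-measurable random variable
(i.e. `X` is measurable w.r.t. the `P`-completion of `G`). -/
theorem stmt12 {Ω S : Type*} [mΩ : MeasurableSpace Ω]
    [MeasurableSpace S] [TopologicalSpace S] [PolishSpace S] [BorelSpace S]
    (P : Measure Ω) [IsProbabilityMeasure P] (G : MeasurableSpace Ω) (hG : G ≤ mΩ)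
    (X Y : Ω → S) (hX : Measurable[mΩ] X) (hY : Measurable[mΩ] Y)
    (ξ : Ω → Measure S) (hξG : Measurable[G] ξ)
    (hξp : ∀ ω, IsProbabilityMeasure (ξ ω))
    (hiid : ∀ A B : Set S, MeasurableSet A → MeasurableSet B →
      ∀ C : Set Ω, MeasurableSet[G] C →
        P (C ∩ X ⁻¹' A ∩ Y ⁻¹' B) = ∫⁻ ω in C, ξ ω A * ξ ω B ∂P) :
    X =ᵐ[P] Y ↔ ∃ X' : Ω → S, Measurable[G] X' ∧ X =ᵐ[P] X' := by
  letI mΩ' : MeasurableSpace Ω := mΩ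
  have hξuniv : ∀ ω, ξ ω univ = 1 := fun ω => (hξp ω).measure_univ
  -- marginal law of X
  have mX : ∀ (A : Set S), MeasurableSet A → ∀ C : Set Ω, MeasurableSet[G] C →
      P (C ∩ X ⁻¹' A) = ∫⁻ ω in C, ξ ω A ∂P := by
    intro A hA C hC
    have h := hiid A univ hA MeasurableSet.univ C hC
    simp only [preimage_univ, inter_univ, hξuniv, mul_one] at h
    exact h
  -- marginal law of Y
  have mY : ∀ (B : Set S), MeasurableSet B → ∀ C : Set Ω, MeasurableSet[G] C →
      P (C ∩ Y ⁻¹' B) = ∫⁻ ω in C, ξ ω B ∂P := by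
    intro B hB C hC
    have h := hiid univ B MeasurableSet.univ hB C hC
    simp only [preimage_univ, inter_univ, hξuniv, one_mul] at h
    exact h
  -- if `X ∈ A, Z ∉ A` is null for every Borel `A`, then `X = Z` a.s.
  have basis_step : ∀ Z : Ω → S,
      (∀ A : Set S, MeasurableSet A → P (X ⁻¹' A ∩ Z ⁻¹' Aᶜ) = 0) → X =ᵐ[P] Z := by
    intro Z hZ
    obtain ⟨b, hbc, -, hbasis⟩ := TopologicalSpace.exists_countable_basis S
    have hsub : {ω | ¬ X ω = Z ω} ⊆ ⋃ A ∈ b, X ⁻¹' A ∩ Z ⁻¹' Aᶜ := by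
      intro ω hω
      have hne : X ω ≠ Z ω := hω
      obtain ⟨A, hAb, hXA, hAsub⟩ := hbasis.exists_subset_of_mem_open
        (show X ω ∈ ({Z ω}ᶜ : Set S) from hne) isOpen_compl_singleton
      exact mem_biUnion hAb ⟨hXA, fun h => (hAsub h) rfl⟩
    have hnull : P (⋃ A ∈ b, X ⁻¹' A ∩ Z ⁻¹' Aᶜ) = 0 :=
      (measure_biUnion_null_iff hbc).mpr fun A hAb =>
        hZ A (hbasis.isOpen hAb).measurableSet
    exact (ae_iff).mpr (measure_mono_null hsub hnull)
  constructor
  · -- forward direction: X = Y a.s. implies X is a.s. G-measurable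
    intro hXY
    -- nonemptiness
    have hΩne : Nonempty Ω := by
      by_contra h
      rw [not_nonempty_iff] at h
      have h1 : P univ = 1 := measure_univ
      rw [Set.univ_eq_empty_iff.mpr h, measure_empty] at h1
      exact zero_ne_one h1
    have hSne : Nonempty S := by
      by_contra h
      rw [not_nonempty_iff] at h
      have h1 := (hξp hΩne.some).measure_univ
      rw [Set.univ_eq_empty_iff.mpr h, measure_empty] at h1
      exact zero_ne_one h1
    -- embed S into (0, ∞) ⊂ ℝ
    obtain ⟨e, he⟩ := exists_measurableEmbedding_real S
    set e₂ : S → ℝ := fun s => Real.arctan (e s) + 2 with he₂def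
    have he₂m : Measurable e₂ := (Real.measurable_arctan.comp he.measurable).add_const 2
    have he₂i : Function.Injective e₂ := fun a b hab =>
      he.injective (Real.arctan_injective (add_right_cancel
        (show Real.arctan (e a) + 2 = Real.arctan (e b) + 2 from hab)))
    have he₂pos : ∀ s, 0 < e₂ s := by
      intro s
      have h1 := Real.neg_pi_div_two_lt_arctan (e s)
      have h2 := Real.pi_lt_d2
      simp only [he₂def]
      nlinarith
    have he₂emb : MeasurableEmbedding e₂ := he₂m.measurableEmbedding he₂i
    obtain ⟨r, hrm, hre⟩ := he₂emb.exists_measurable_extend (measurable_id (α := S))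
      (fun _ => hSne)
    -- the kernel ξ and its self-product
    let κ : @ProbabilityTheory.Kernel Ω S G _ := @ProbabilityTheory.Kernel.mk Ω S G _ ξ hξG
    haveI : ProbabilityTheory.IsMarkovKernel κ := ⟨fun a => by exact hξp a⟩
    have hκ2measG : Measurable[G] fun ω => (ξ ω).prod (ξ ω) := by
      have heq : ∀ ω, (ξ ω).prod (ξ ω) = (κ ×ₖ κ) ω := fun ω => by
        exact (ProbabilityTheory.Kernel.prod_apply κ κ ω).symm
      simp_rw [heq]
      exact (κ ×ₖ κ).measurable
    have hD : MeasurableSet {p : S × S | p.1 = p.2} :=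
      (isClosed_eq continuous_fst continuous_snd).measurableSet
    have hpair : Measurable[mΩ] fun ω => (X ω, Y ω) := hX.prodMk hY
    have hprodm : Measurable[mΩ] fun ω => (ξ ω).prod (ξ ω) := hκ2measG.mono hG le_rfl
    -- joint law computation
    have hμ12 : P.map (fun ω => (X ω, Y ω)) = P.bind fun ω => (ξ ω).prod (ξ ω) := by
      haveI := Measure.isProbabilityMeasure_map (μ := P) hpair.aemeasurable
      refine ext_of_generate_finite _ generateFrom_prod.symm isPiSystem_prod ?_ ?_
      · rintro s ⟨A, hA, B, hB, rfl⟩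
        rw [Measure.map_apply hpair ((hA : MeasurableSet A).prod hB),
          Measure.bind_apply ((hA : MeasurableSet A).prod hB) hprodm.aemeasurable]
        have hpre : (fun ω => (X ω, Y ω)) ⁻¹' (A ×ˢ B) = univ ∩ X ⁻¹' A ∩ Y ⁻¹' B := by
          rw [Set.mk_preimage_prod, univ_inter]
        rw [hpre, hiid A B hA hB univ MeasurableSet.univ]
        rw [Measure.restrict_univ]
        exact (lintegral_congr fun ω => (Measure.prod_prod A B).symm)
      · rw [Measure.map_apply hpair MeasurableSet.univ, preimage_univ,
          Measure.bind_apply MeasurableSet.univ hprodm.aemeasurable]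
        have h1 : ∀ ω, (ξ ω).prod (ξ ω) univ = 1 := fun ω => by
          haveI := hξp ω; exact measure_univ
        simp [h1]
    -- the diagonal has full product mass a.e.
    have hDone : ∫⁻ ω, (ξ ω).prod (ξ ω) {p : S × S | p.1 = p.2} ∂P = 1 := by
      have hsm : MeasurableSet[mΩ] {ω | X ω = Y ω} := hpair hD
      have hs1 : P {ω | X ω = Y ω} = 1 := by
        have hc : P {ω | ¬ X ω = Y ω} = 0 := (ae_iff).mp hXY
        have hcompl : P ({ω | X ω = Y ω}ᶜ) = 0 := hc
        rw [measure_compl hsm (measure_ne_top _ _), measure_univ] at hcompl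
        exact le_antisymm prob_le_one (tsub_eq_zero_iff_le.mp hcompl)
      have h1 : (P.map fun ω => (X ω, Y ω)) {p : S × S | p.1 = p.2} = 1 := by
        rw [Measure.map_apply hpair hD]; exact hs1
      rw [hμ12, Measure.bind_apply hD hprodm.aemeasurable] at h1
      exact h1
    have hae1 : ∀ᵐ ω ∂P, (ξ ω).prod (ξ ω) {p : S × S | p.1 = p.2} = 1 := by
      refine aux_ae_eq_one_of_lintegral_eq ?_ ?_ ?_
      · have h := ProbabilityTheory.Kernel.measurable_coe (κ ×ₖ κ) hD
        rw [show (fun a => (κ ×ₖ κ) a {p : S × S | p.1 = p.2}) =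
            fun ω => (ξ ω).prod (ξ ω) {p : S × S | p.1 = p.2} from
          funext fun ω => by rw [ProbabilityTheory.Kernel.prod_apply]; rfl] at h
        exact h.mono hG le_rfl
      · intro ω; haveI := hξp ω; exact prob_le_one
      · rw [measure_univ]; exact hDone
    -- define the G-measurable representative
    set X' : Ω → S :=
      fun ω => r ((∫⁻ x, ENNReal.ofReal x ∂((ξ ω).map e₂)).toReal) with hX'def
    have hX'G : Measurable[G] X' :=
      hrm.comp (ENNReal.measurable_toReal.comp
        ((Measure.measurable_lintegral ENNReal.measurable_ofReal).comp
          ((Measure.measurable_map e₂ he₂m).comp hξG)))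
    -- a.e., ξ ω is the Dirac measure at X' ω
    have hdirac : ∀ᵐ ω ∂P, ξ ω = Measure.dirac (X' ω) := by
      filter_upwards [hae1] with ω hω
      haveI := hξp ω
      have hg : Measurable fun x : S => (ξ ω) {x} := by
        have h := measurable_measure_prodMk_left (ν := ξ ω) hD
        rw [show (fun x : S => (ξ ω) (Prod.mk x ⁻¹' {p : S × S | p.1 = p.2})) =
            fun x : S => (ξ ω) {x} from funext fun x => by
          congr 1; ext y; simp [eq_comm]] at h
        exact h
      have hprodD : (ξ ω).prod (ξ ω) {p : S × S | p.1 = p.2} =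
          ∫⁻ x, (ξ ω) {x} ∂(ξ ω) := by
        rw [Measure.prod_apply hD]
        refine lintegral_congr fun x => ?_
        congr 1; ext y; simp [eq_comm]
      have hae2 : ∀ᵐ x ∂(ξ ω), (ξ ω) {x} = 1 :=
        aux_ae_eq_one_of_lintegral_eq hg (fun x => prob_le_one)
          (by rw [← hprodD, hω, measure_univ])
      obtain ⟨c, hc⟩ := hae2.exists
      have hξc : ξ ω = Measure.dirac c := aux_eq_dirac_of_singleton _ hc
      have hXc : X' ω = c := by
        rw [hX'def]
        simp only [hξc, Measure.map_dirac' he₂m, lintegral_dirac]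
        rw [ENNReal.toReal_ofReal (he₂pos c).le]
        exact congrFun hre c
      rw [hXc]; exact hξc
    refine ⟨X', hX'G, ?_⟩
    refine basis_step X' ?_
    intro A hA
    have hCG : MeasurableSet[G] (X' ⁻¹' Aᶜ) := hX'G hA.compl
    have hm := mX A hA (X' ⁻¹' Aᶜ) hCG
    have hz : ∫⁻ ω in X' ⁻¹' Aᶜ, ξ ω A ∂P = 0 := by
      have h0 : ∀ᵐ ω ∂(P.restrict (X' ⁻¹' Aᶜ)), ξ ω A = 0 := by
        filter_upwards [ae_restrict_of_ae hdirac, ae_restrict_mem (hG _ hCG)] with ω h1 h2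
        rw [h1, Measure.dirac_apply' _ hA, Set.indicator_of_notMem h2]
      rw [lintegral_congr_ae h0, lintegral_zero]
    rw [inter_comm]
    rw [hm, hz]
  · -- reverse direction: X a.s. G-measurable implies X = Y a.s.
    rintro ⟨X', hX'G, hXX'⟩
    refine basis_step Y ?_
    intro A hA
    have hCG : MeasurableSet[G] (X' ⁻¹' A) := hX'G hA
    -- P (X'⁻¹ A ∩ X⁻¹ Aᶜ) = 0
    have hnull1 : P (X' ⁻¹' A ∩ X ⁻¹' Aᶜ) = 0 := by
      have hae : (X' ⁻¹' A ∩ X ⁻¹' Aᶜ : Set Ω) =ᵐ[P] (∅ : Set Ω) := by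
        filter_upwards [hXX'] with ω hω
        have : (ω ∈ X' ⁻¹' A ∩ X ⁻¹' Aᶜ) = (ω ∈ (∅ : Set Ω)) := by
          simp only [mem_inter_iff, mem_preimage, mem_compl_iff, mem_empty_iff_false,
            eq_iff_iff, iff_false, not_and, hω]
          intro h1 h2; exact h2 h1
        exact this
      rw [measure_congr hae, measure_empty]
    have hz : ∫⁻ ω in X' ⁻¹' A, ξ ω Aᶜ ∂P = 0 := by
      rw [← mX Aᶜ hA.compl (X' ⁻¹' A) hCG]
      exact hnull1
    have hY0 : P (X' ⁻¹' A ∩ Y ⁻¹' Aᶜ) = 0 := by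
      rw [mY Aᶜ hA.compl (X' ⁻¹' A) hCG]; exact hz
    have hX0 : P ((X' ⁻¹' A)ᶜ ∩ X ⁻¹' A) = 0 := by
      have hae : ((X' ⁻¹' A)ᶜ ∩ X ⁻¹' A : Set Ω) =ᵐ[P] (∅ : Set Ω) := by
        filter_upwards [hXX'] with ω hω
        have : (ω ∈ (X' ⁻¹' A)ᶜ ∩ X ⁻¹' A) = (ω ∈ (∅ : Set Ω)) := by
          simp only [mem_inter_iff, mem_preimage, mem_compl_iff, mem_empty_iff_false,
            eq_iff_iff, iff_false, not_and, hω]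
          intro h1 h2; exact h1 h2
        exact this
      rw [measure_congr hae, measure_empty]
    have hsub : X ⁻¹' A ∩ Y ⁻¹' Aᶜ ⊆
        ((X' ⁻¹' A)ᶜ ∩ X ⁻¹' A) ∪ (X' ⁻¹' A ∩ Y ⁻¹' Aᶜ) := by
      intro ω hω
      by_cases h : ω ∈ X' ⁻¹' A
      · exact Or.inr ⟨h, hω.2⟩
      · exact Or.inl ⟨h, hω.1⟩
    refine measure_mono_null hsub ?_
    refine le_antisymm ((measure_union_le _ _).trans ?_) zero_le
    rw [hX0, hY0]; simp
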